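/- Let L₁, L₂ be complex symmetric matrices with Takagi factorizations L₁ = V Λ₁ Vᵀ, L₂ = W Λ₂ Wᵀ, where the diagonal entries Λ₁ᵢ and Λ₂ⱼ are pairwise distinct (Λ₁ᵢ ≠ Λ₂ⱼ for all i,j). Then for every Y the equation X L₂ − L₁ conj(X) = Y has the unique solution determined entrywise by (Vᴴ X W)ᵢⱼ = Λ₂ⱼ/(Λ₂ⱼ² − Λ₁ᵢ²)·(Vᴴ Y conj(W))ᵢⱼ + Λ₁ᵢ/(Λ₂ⱼ² − Λ₁ᵢ²)·conj((Vᴴ Y conj(W))ᵢⱼ). -/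

import Mathlib

open Matrix

/-- If the Takagi singular values of `L₁` and `L₂` are pairwise distinct, the equation
`X L₂ − L₁ conj(X) = Y` has a unique solution, determined entrywise by the stated formula. -/
theorem sylvester_type_equation_unique_solution (n₁ n₂ : ℕ)
    (L₁ : Matrix (Fin n₁) (Fin n₁) ℂ) (L₂ : Matrix (Fin n₂) (Fin n₂) ℂ)
    (hL₁ : L₁ᵀ = L₁) (hL₂ : L₂ᵀ = L₂)
    (V : Matrix (Fin n₁) (Fin n₁) ℂ) (W : Matrix (Fin n₂) (Fin n₂) ℂ)
    (hV : V ∈ Matrix.unitaryGroup (Fin n₁) ℂ) (hW : W ∈ Matrix.unitaryGroup (Fin n₂) ℂ)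
    (Λ₁ : Fin n₁ → ℝ) (Λ₂ : Fin n₂ → ℝ)
    (hΛ₁ : ∀ i, 0 ≤ Λ₁ i) (hΛ₂ : ∀ j, 0 ≤ Λ₂ j)
    (hfac₁ : L₁ = V * Matrix.diagonal (fun i => (Λ₁ i : ℂ)) * Vᵀ)
    (hfac₂ : L₂ = W * Matrix.diagonal (fun j => (Λ₂ j : ℂ)) * Wᵀ)
    (hdistinct : ∀ i j, Λ₁ i ≠ Λ₂ j)
    (Y : Matrix (Fin n₁) (Fin n₂) ℂ) :
    ∃! X : Matrix (Fin n₁) (Fin n₂) ℂ,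
      X * L₂ - L₁ * X.map (starRingEnd ℂ) = Y ∧
      ∀ i j, (Vᴴ * X * W) i j =
        ((Λ₂ j : ℂ) / ((Λ₂ j : ℂ) ^ 2 - (Λ₁ i : ℂ) ^ 2)) * (Vᴴ * Y * W.map (starRingEnd ℂ)) i j
        + ((Λ₁ i : ℂ) / ((Λ₂ j : ℂ) ^ 2 - (Λ₁ i : ℂ) ^ 2))
            * starRingEnd ℂ ((Vᴴ * Y * W.map (starRingEnd ℂ)) i j) := by
  have hV1 : Vᴴ * V = 1 := by simpa [star_eq_conjTranspose] using hV.1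
  have hV2 : V * Vᴴ = 1 := by simpa [star_eq_conjTranspose] using hV.2
  have hW1 : Wᴴ * W = 1 := by simpa [star_eq_conjTranspose] using hW.1
  have hW2 : W * Wᴴ = 1 := by simpa [star_eq_conjTranspose] using hW.2
  -- consequences for transposes/conjugates
  have hVt : Vᵀ * V.map (starRingEnd ℂ) = 1 := by
    have h := congrArg Matrix.transpose hV1
    simpa [transpose_mul, conjTranspose, transpose_map] using h
  have hWc : W.map (starRingEnd ℂ) * Wᵀ = 1 := by
    have h := congrArg Matrix.transpose hW2
    simpa [transpose_mul, conjTranspose, transpose_map] using h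
  set B : Matrix (Fin n₁) (Fin n₂) ℂ := Vᴴ * Y * W.map (starRingEnd ℂ) with hB
  have hd : ∀ (i : Fin n₁) (j : Fin n₂), ((Λ₂ j : ℂ) ^ 2 - (Λ₁ i : ℂ) ^ 2) ≠ 0 := by
    intro i j
    have : (Λ₁ i) ^ 2 ≠ (Λ₂ j) ^ 2 := fun h =>
      hdistinct i j (by nlinarith [hΛ₁ i, hΛ₂ j, sq_nonneg (Λ₁ i - Λ₂ j), sq_nonneg (Λ₁ i + Λ₂ j)])
    intro h
    apply this
    have := sub_eq_zero.mp h
    exact_mod_cast this.symm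
  set Z : Matrix (Fin n₁) (Fin n₂) ℂ := Matrix.of (fun i j =>
    ((Λ₂ j : ℂ) / ((Λ₂ j : ℂ) ^ 2 - (Λ₁ i : ℂ) ^ 2)) * B i j
      + ((Λ₁ i : ℂ) / ((Λ₂ j : ℂ) ^ 2 - (Λ₁ i : ℂ) ^ 2)) * starRingEnd ℂ (B i j)) with hZ
  refine ⟨V * Z * Wᴴ, ⟨?_, ?_⟩, ?_⟩
  · -- the equation
    have hmap : (V * Z * Wᴴ).map (starRingEnd ℂ)
        = V.map (starRingEnd ℂ) * Z.map (starRingEnd ℂ) * Wᵀ := by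
      ext i j
      simp [Matrix.map_apply, Matrix.mul_apply, conjTranspose_apply, map_sum, Finset.mul_sum]
    have key : Z * Matrix.diagonal (fun j => (Λ₂ j : ℂ))
        - Matrix.diagonal (fun i => (Λ₁ i : ℂ)) * Z.map (starRingEnd ℂ) = B := by
      ext i j
      have hdij := hd i j
      have hconjd : starRingEnd ℂ ((Λ₂ j : ℂ) ^ 2 - (Λ₁ i : ℂ) ^ 2)
          = (Λ₂ j : ℂ) ^ 2 - (Λ₁ i : ℂ) ^ 2 := by
        simp [map_sub, Complex.conj_ofReal]
      simp only [Matrix.sub_apply, Matrix.mul_diagonal, Matrix.diagonal_mul, Matrix.map_apply,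
        hZ, Matrix.of_apply, map_add, _root_.map_mul, map_div₀, hconjd, Complex.conj_ofReal,
        RingHomCompTriple.comp_apply, RingHom.id_apply, Complex.conj_conj]
      field_simp
      ring
    calc (V * Z * Wᴴ) * L₂ - L₁ * (V * Z * Wᴴ).map (starRingEnd ℂ)
        = V * (Z * Matrix.diagonal (fun j => (Λ₂ j : ℂ))
            - Matrix.diagonal (fun i => (Λ₁ i : ℂ)) * Z.map (starRingEnd ℂ)) * Wᵀ := by
          rw [hmap, hfac₁, hfac₂]
          rw [Matrix.mul_sub, Matrix.sub_mul]
          congr 1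
          · calc V * Z * Wᴴ * (W * Matrix.diagonal (fun j => (Λ₂ j : ℂ)) * Wᵀ)
                = V * Z * (Wᴴ * W) * Matrix.diagonal (fun j => (Λ₂ j : ℂ)) * Wᵀ := by
                  simp only [Matrix.mul_assoc, Matrix.one_mul, Matrix.mul_one]
              _ = V * (Z * Matrix.diagonal (fun j => (Λ₂ j : ℂ))) * Wᵀ := by
                  rw [hW1]; simp only [Matrix.mul_assoc, Matrix.one_mul, Matrix.mul_one]
          · calc V * Matrix.diagonal (fun i => (Λ₁ i : ℂ)) * Vᵀ *
                  (V.map (starRingEnd ℂ) * Z.map (starRingEnd ℂ) * Wᵀ)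
                = V * Matrix.diagonal (fun i => (Λ₁ i : ℂ)) * (Vᵀ * V.map (starRingEnd ℂ)) *
                    Z.map (starRingEnd ℂ) * Wᵀ := by simp only [Matrix.mul_assoc, Matrix.one_mul, Matrix.mul_one]
              _ = V * (Matrix.diagonal (fun i => (Λ₁ i : ℂ)) * Z.map (starRingEnd ℂ)) * Wᵀ := by
                  rw [hVt]; simp only [Matrix.mul_assoc, Matrix.one_mul, Matrix.mul_one]
      _ = V * B * Wᵀ := by rw [key]
      _ = (V * Vᴴ) * Y * (W.map (starRingEnd ℂ) * Wᵀ) := by rw [hB]; simp only [Matrix.mul_assoc, Matrix.one_mul, Matrix.mul_one]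
      _ = Y := by rw [hV2, hWc]; simp
  · -- the entrywise formula
    intro i j
    have : Vᴴ * (V * Z * Wᴴ) * W = Z := by
      calc Vᴴ * (V * Z * Wᴴ) * W = (Vᴴ * V) * Z * (Wᴴ * W) := by simp only [Matrix.mul_assoc, Matrix.one_mul, Matrix.mul_one]
        _ = Z := by rw [hV1, hW1]; simp
    rw [this]
    rfl
  · -- uniqueness
    rintro X' ⟨-, hX'⟩
    have h2 : Vᴴ * X' * W = Vᴴ * (V * Z * Wᴴ) * W := by
      have : Vᴴ * (V * Z * Wᴴ) * W = Z := by
        calc Vᴴ * (V * Z * Wᴴ) * W = (Vᴴ * V) * Z * (Wᴴ * W) := by simp only [Matrix.mul_assoc, Matrix.one_mul, Matrix.mul_one]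
          _ = Z := by rw [hV1, hW1]; simp
      rw [this]
      ext i j
      exact hX' i j
    have := congrArg (fun M => V * M * Wᴴ) h2
    calc X' = (V * Vᴴ) * X' * (W * Wᴴ) := by rw [hV2, hW2]; simp
      _ = V * (Vᴴ * X' * W) * Wᴴ := by simp only [Matrix.mul_assoc, Matrix.one_mul, Matrix.mul_one]
      _ = V * (Vᴴ * (V * Z * Wᴴ) * W) * Wᴴ := by rw [h2]
      _ = (V * Vᴴ) * (V * Z * Wᴴ) * (W * Wᴴ) := by simp only [Matrix.mul_assoc, Matrix.one_mul, Matrix.mul_one]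
      _ = V * Z * Wᴴ := by rw [hV2, hW2]; simp
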